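/- Let 0 < p < 1 and let f_0 : ℝ → ℝ be continuously differentiable on [0,1]. For n ≥ 1 define f_n : [0,1] → ℝ by f_n(x) = f_0(0) + ∫_0^x f_0'(s) / (1 − p·s)^n ds. Then for every n ≥ 1 and every x ∈ [0,1], (1 − p·x)·f_n(x) + p·∫_0^x f_n(y) dy = f_{n−1}(x). -/

import Mathlib

open MeasureTheory intervalIntegral

theorem stmt10 (p : ℝ) (hp : 0 < p) (hp1 : p < 1)
    (f0 f0' : ℝ → ℝ)
    (hderiv : ∀ x ∈ Set.Icc (0 : ℝ) 1, HasDerivAt f0 (f0' x) x)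
    (hcont : ContinuousOn f0' (Set.Icc (0 : ℝ) 1))
    (f : ℕ → ℝ → ℝ) (hf0 : f 0 = f0)
    (hfdef : ∀ n : ℕ, 1 ≤ n → ∀ x ∈ Set.Icc (0 : ℝ) 1,
      f n x = f0 0 + ∫ s in (0 : ℝ)..x, f0' s / (1 - p * s) ^ n) :
    ∀ n : ℕ, 1 ≤ n → ∀ x ∈ Set.Icc (0 : ℝ) 1,
      (1 - p * x) * f n x + p * (∫ y in (0 : ℝ)..x, f n y) = f (n - 1) x := by
  intro n hn x hx
  obtain ⟨hx0, hx1⟩ := hx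
  -- clamp function
  set c : ℝ → ℝ := fun s => max 0 (min s 1) with hcdef
  have hc_cont : Continuous c := continuous_const.max (continuous_id.min continuous_const)
  have hc_mem : ∀ s, c s ∈ Set.Icc (0 : ℝ) 1 := by
    intro s
    constructor
    · exact le_max_left _ _
    · exact max_le (by norm_num) (min_le_right _ _)
  have hc_eq : ∀ s ∈ Set.Icc (0 : ℝ) 1, c s = s := by
    intro s hs
    simp only [hcdef, min_eq_left hs.2, max_eq_right hs.1]
  -- denominator positivity
  have hden : ∀ s, (0 : ℝ) < 1 - p * c s := by
    intro s
    have h1 : p * c s ≤ p * 1 := by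
      exact mul_le_mul_of_nonneg_left (hc_mem s).2 hp.le
    nlinarith
  -- extended integrands
  set g : ℕ → ℝ → ℝ := fun m s => f0' (c s) / (1 - p * c s) ^ m with hgdef
  have hgcont : ∀ m, Continuous (g m) := by
    intro m
    have h1 : Continuous fun s => f0' (c s) :=
      hcont.comp_continuous hc_cont hc_mem
    have h2 : Continuous fun s => (1 - p * c s) ^ m :=
      (continuous_const.sub (continuous_const.mul hc_cont)).pow m
    exact h1.div h2 (fun s => pow_ne_zero m (hden s).ne')
  -- g agrees with the original integrand on [0,1]
  have hsub : ∀ y ∈ Set.Icc (0 : ℝ) 1, Set.uIcc (0 : ℝ) y ⊆ Set.Icc (0 : ℝ) 1 := by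
    intro y hy
    rw [Set.uIcc_of_le hy.1]
    exact Set.Icc_subset_Icc le_rfl hy.2
  have hgeq : ∀ m, ∀ y ∈ Set.Icc (0 : ℝ) 1,
      (∫ s in (0 : ℝ)..y, f0' s / (1 - p * s) ^ m) = ∫ s in (0 : ℝ)..y, g m s := by
    intro m y hy
    refine intervalIntegral.integral_congr fun s hs => ?_
    have := hc_eq s (hsub y hy hs)
    simp [hgdef, this]
  -- f n rewritten via g on [0,1]
  have hfn : ∀ y ∈ Set.Icc (0 : ℝ) 1, f n y = f0 0 + ∫ s in (0 : ℝ)..y, g n s := by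
    intro y hy
    rw [hfdef n hn y hy, hgeq n y hy]
  have hx01 : x ∈ Set.Icc (0 : ℝ) 1 := ⟨hx0, hx1⟩
  -- f (n-1) rewritten via g
  have hfn1 : f (n - 1) x = f0 0 + ∫ s in (0 : ℝ)..x, g (n - 1) s := by
    rcases Nat.eq_or_lt_of_le hn with h1 | h1
    · -- n = 1
      have hn1 : n - 1 = 0 := by omega
      rw [hn1, hf0]
      have hftc : (∫ s in (0 : ℝ)..x, f0' s) = f0 x - f0 0 := by
        apply intervalIntegral.integral_eq_sub_of_hasDerivAt
        · intro s hs
          exact hderiv s (hsub x hx01 hs)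
        · exact (hcont.mono (hsub x hx01)).intervalIntegrable
      have hg0 : (∫ s in (0 : ℝ)..x, f0' s) = ∫ s in (0 : ℝ)..x, g 0 s := by
        refine intervalIntegral.integral_congr fun s hs => ?_
        simp [hgdef, hc_eq s (hsub x hx01 hs)]
      rw [← hg0, hftc]; ring
    · have hn1 : 1 ≤ n - 1 := by omega
      rw [hfdef (n - 1) hn1 x hx01, hgeq (n - 1) x hx01]
  -- G m : antiderivative of g m
  set G : ℝ → ℝ := fun y => ∫ s in (0 : ℝ)..y, g n s with hGdef
  have hGderiv : ∀ y : ℝ, HasDerivAt G (g n y) y := by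
    intro y
    exact intervalIntegral.integral_hasDerivAt_right
      ((hgcont n).intervalIntegrable _ _)
      ((hgcont n).stronglyMeasurableAtFilter _ _)
      (hgcont n).continuousAt
  have hGcont : Continuous G :=
    continuous_iff_continuousAt.mpr fun y => (hGderiv y).continuousAt
  -- rewrite the integral of f n
  have hint1 : (∫ y in (0 : ℝ)..x, f n y) = ∫ y in (0 : ℝ)..x, (f0 0 + G y) := by
    refine intervalIntegral.integral_congr fun y hy => ?_
    exact hfn y (hsub x hx01 hy)
  have hint2 : (∫ y in (0 : ℝ)..x, (f0 0 + G y)) = x * f0 0 + ∫ y in (0 : ℝ)..x, G y := by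
    rw [intervalIntegral.integral_add (intervalIntegrable_const)
      (hGcont.intervalIntegrable _ _)]
    simp [mul_comm]
  -- integration by parts: ∫ G = x * G x - ∫ y * g n y
  have hparts : (∫ y in (0 : ℝ)..x, G y) = G x * x - ∫ y in (0 : ℝ)..x, g n y * y := by
    have := intervalIntegral.integral_mul_deriv_eq_deriv_mul_of_hasDerivAt
      (a := (0:ℝ)) (b := x) (u := G) (v := fun y => y) (u' := g n) (v' := fun _ => (1 : ℝ))
      (hGcont.continuousOn) (continuous_id.continuousOn)
      (fun y _ => hGderiv y) (fun y _ => hasDerivAt_id y)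
      ((hgcont n).intervalIntegrable _ _) (intervalIntegrable_const)
    simpa using this
  -- combine g n terms into g (n-1)
  have hcomb : G x - p * (∫ y in (0 : ℝ)..x, g n y * y) = ∫ y in (0 : ℝ)..x, g (n - 1) y := by
    have h1 : G x - p * (∫ y in (0 : ℝ)..x, g n y * y)
        = ∫ y in (0 : ℝ)..x, (g n y - p * (g n y * y)) := by
      rw [intervalIntegral.integral_sub ((hgcont n).intervalIntegrable _ _)
        (show IntervalIntegrable (fun y => p * (g n y * y)) volume 0 x from
          ((continuous_const.mul ((hgcont n).mul continuous_id')).intervalIntegrable _ _)),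
        intervalIntegral.integral_const_mul]
    rw [h1]
    refine intervalIntegral.integral_congr fun y hy => ?_
    have hy01 : y ∈ Set.Icc (0 : ℝ) 1 := hsub x hx01 hy
    have hcy : c y = y := hc_eq y hy01
    have hdy : (0 : ℝ) < 1 - p * y := by rw [← hcy]; exact hden y
    have hnn : n = (n - 1) + 1 := by omega
    simp only [hgdef, hcy]
    rw [hnn, pow_succ]
    field_simp
    ring
    rw [Nat.add_sub_cancel_left]
  -- final computation
  have hfx : f n x = f0 0 + G x := hfn x hx01
  rw [hfx, hint1, hint2, hparts, hfn1, ← hcomb]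
  ring
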